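/- Every graph without a component of order at most two has a spanning forest each of whose components is a 1-star. -/

import Mathlib

open SimpleGraph

variable {V : Type*}

/-- The union of the colors of the edges incident to a vertex. -/
def unionAt [Fintype V] [DecidableEq V] (G : SimpleGraph V) [DecidableRel G.Adj]
    {α : Type*} [DecidableEq α] (c : Sym2 V → Finset α) (v : V) : Finset α :=
  (G.neighborFinset v).biUnion fun u => c s(v, u)

/-- `c` is a union vertex-distinguishing edge coloring of `G` with colors
nonempty subsets of `[k]`. -/
def IsUVD [Fintype V] [DecidableEq V] (G : SimpleGraph V) [DecidableRel G.Adj]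
    (k : ℕ) (c : Sym2 V → Finset (Fin k)) : Prop :=
  (∀ e ∈ G.edgeSet, c e ≠ ∅) ∧ (∀ v, unionAt G c v ≠ ∅) ∧
    Function.Injective (unionAt G c)

/-- The union vertex-distinguishing chromatic index. -/
noncomputable def chiUnion [Fintype V] [DecidableEq V] (G : SimpleGraph V)
    [DecidableRel G.Adj] : ℕ :=
  sInf {k | ∃ c : Sym2 V → Finset (Fin k), IsUVD G k c}

/-- `G` has no connected component of order at most two. -/
def NoSmallComponent (G : SimpleGraph V) : Prop :=
  ∀ v : V, ∃ u w : V, u ≠ w ∧ u ≠ v ∧ w ≠ v ∧ G.Reachable v u ∧ G.Reachable v w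

/-- The number of vertices of the component of `v`. -/
noncomputable def compSize (F : SimpleGraph V) (v : V) : ℕ := {u | F.Reachable v u}.ncard

/-- `v` is the center of a component of `F` that is a 1-star. -/
def Is1StarCenter (F : SimpleGraph V) (v : V) : Prop :=
  3 ≤ compSize F v ∧ (∀ u, F.Reachable v u → F.dist v u ≤ 2) ∧
    (∀ u, F.Adj v u → {x | F.Adj u x}.ncard ≤ 2)

/-- `F` is a 1-star: a star on at least three vertices with each edge
subdivided at most once. -/
def Is1Star (F : SimpleGraph V) : Prop := F.Connected ∧ ∃ v, Is1StarCenter F v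

/-- `F` is a forest each of whose components is a 1-star. -/
def IsForestOf1Stars (F : SimpleGraph V) : Prop :=
  F.IsAcyclic ∧ ∀ w : V, ∃ v, F.Reachable w v ∧ Is1StarCenter F v

/-- `A 1, …, A m` is an `m`-star of sets. -/
def IsStar {α : Type*} [DecidableEq α] (m : ℕ) (A : ℕ → Finset α) : Prop :=
  (∀ i j, 1 ≤ i → i ≤ m → 1 ≤ j → j ≤ m → A i = A j → i = j) ∧
  (m = 2 → A 2 ⊂ A 1) ∧
  (m = 3 → A 1 = A 2 ∪ A 3) ∧
  (4 ≤ m → A 1 = A 2 ∪ A 4 ∧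
    ∀ i, 1 ≤ i → (2 * i ≤ m → A (2 * i) ⊂ A 1) ∧
      (2 * i + 1 ≤ m → A (2 * i + 1) ⊂ A (2 * i)))

/-- A collection of sets is an `m`-star. -/
def IsStarColl {α : Type*} [DecidableEq α] (m : ℕ) (S : Finset (Finset α)) : Prop :=
  ∃ A : ℕ → Finset α, IsStar m A ∧ S = (Finset.Icc 1 m).image A

section AuxFor1Stars
open SimpleGraph Walk

lemma aux_surgery {F : SimpleGraph V} {u v a b : V} (p : F.Walk a b) :
    (F.deleteEdges {s(u,v)}).Reachable a b ∨ (F.deleteEdges {s(u,v)}).Reachable a u ∨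
      (F.deleteEdges {s(u,v)}).Reachable a v := by
  induction p with
  | nil => exact Or.inl (Reachable.refl _)
  | @cons x y z h q ih =>
    by_cases he : s(x,y) = s(u,v)
    · rcases Sym2.eq_iff.mp he with ⟨hx, hy⟩ | ⟨hx, hy⟩
      · subst hx; exact Or.inr (Or.inl (Reachable.refl _))
      · subst hx; exact Or.inr (Or.inr (Reachable.refl _))
    · have hadj : (F.deleteEdges {s(u,v)}).Adj x y := by
        rw [SimpleGraph.deleteEdges_adj]; exact ⟨h, by simpa using he⟩
      rcases ih with h1 | h1 | h1
      · exact Or.inl (hadj.reachable.trans h1)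
      · exact Or.inr (Or.inl (hadj.reachable.trans h1))
      · exact Or.inr (Or.inr (hadj.reachable.trans h1))

lemma aux_bypass {F : SimpleGraph V} {u v : V}
    (hR : (F.deleteEdges {s(u,v)}).Reachable u v) {a b : V} (p : F.Walk a b) :
    (F.deleteEdges {s(u,v)}).Reachable a b := by
  induction p with
  | nil => exact Reachable.refl _
  | @cons x y z h q ih =>
    by_cases he : s(x,y) = s(u,v)
    · rcases Sym2.eq_iff.mp he with ⟨hx, hy⟩ | ⟨hx, hy⟩
      · subst hx; subst hy; exact hR.trans ih
      · subst hx; subst hy; exact hR.symm.trans ih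
    · have hadj : (F.deleteEdges {s(u,v)}).Adj x y := by
        rw [SimpleGraph.deleteEdges_adj]; exact ⟨h, by simpa using he⟩
      exact hadj.reachable.trans ih

lemma three_le_imp [Fintype V] {F : SimpleGraph V} {v : V} (h3 : 3 ≤ {u | F.Reachable v u}.ncard) :
    ∃ u w : V, u ≠ w ∧ u ≠ v ∧ w ≠ v ∧ F.Reachable v u ∧ F.Reachable v w := by
  have hfin : ({u | F.Reachable v u} \ {v}).Finite := Set.toFinite _
  have hv : v ∈ {u | F.Reachable v u} := Reachable.refl v
  have h2 : 1 < ({u | F.Reachable v u} \ {v}).ncard := by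
    have := Set.ncard_diff_singleton_of_mem (s := {u | F.Reachable v u}) hv
    omega
  obtain ⟨a, b, ha, hb, hab⟩ := (Set.one_lt_ncard_iff hfin).mp h2
  exact ⟨a, b, hab, ha.2, hb.2, ha.1, hb.1⟩

lemma nsc_ncard [Fintype V] {F : SimpleGraph V} (h : NoSmallComponent F) (v : V) :
    3 ≤ {u | F.Reachable v u}.ncard := by
  obtain ⟨u, w, huw, huv, hwv, hru, hrw⟩ := h v
  have hsub : {v, u, w} ⊆ {x | F.Reachable v x} := by
    intro x hx
    rcases hx with rfl | rfl | rfl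
    · exact Reachable.refl _
    · exact hru
    · exact hrw
  have : ({v, u, w} : Set V).ncard = 3 := by
    rw [Set.ncard_insert_of_notMem (by simp [huv.symm, hwv.symm]) (Set.toFinite _),
      Set.ncard_pair huw]
  calc 3 = ({v, u, w} : Set V).ncard := this.symm
    _ ≤ _ := Set.ncard_le_ncard hsub (Set.toFinite _)

lemma small_of_not_nsc [Fintype V] {F' : SimpleGraph V} (h : ¬ NoSmallComponent F') :
    ∃ z, {u | F'.Reachable z u}.ncard ≤ 2 := by
  rw [NoSmallComponent] at h
  push_neg at h
  obtain ⟨z, hz⟩ := h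
  refine ⟨z, ?_⟩
  by_contra h'
  push_neg at h'
  obtain ⟨u, w, huw, huv, hwv, hru, hrw⟩ := three_le_imp (F := F') (v := z) (by omega)
  exact hz u w huw huv hwv hru hrw

lemma exists_minimal [Fintype V] (G : SimpleGraph V) (h : NoSmallComponent G) :
    ∃ F, F ≤ G ∧ NoSmallComponent F ∧
      ∀ F', F' ≤ G → NoSmallComponent F' → F.edgeSet.ncard ≤ F'.edgeSet.ncard := by
  classical
  let S : Set ℕ := {n | ∃ F, F ≤ G ∧ NoSmallComponent F ∧ F.edgeSet.ncard = n}
  have hne : G.edgeSet.ncard ∈ S := ⟨G, le_refl _, h, rfl⟩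
  obtain ⟨F, hFG, hF, hcard⟩ := Nat.sInf_mem (Set.nonempty_of_mem hne)
  exact ⟨F, hFG, hF, fun F' hF'G hF' => hcard ▸ Nat.sInf_le ⟨F', hF'G, hF', rfl⟩⟩

lemma delete_breaks [Fintype V] {G F : SimpleGraph V} (hFG : F ≤ G)
    (hmin : ∀ F', F' ≤ G → NoSmallComponent F' → F.edgeSet.ncard ≤ F'.edgeSet.ncard)
    {u v : V} (huv : F.Adj u v) : ¬ NoSmallComponent (F.deleteEdges {s(u,v)}) := by
  intro hnsc
  have hle := hmin _ ((F.deleteEdges_le _).trans hFG) hnsc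
  have hss : (F.deleteEdges {s(u,v)}).edgeSet ⊂ F.edgeSet := by
    constructor
    · exact SimpleGraph.edgeSet_mono (F.deleteEdges_le _)
    · intro hsub
      have : s(u,v) ∈ (F.deleteEdges {s(u,v)}).edgeSet := hsub huv
      rw [SimpleGraph.mem_edgeSet, SimpleGraph.deleteEdges_adj] at this
      simp at this
  have := Set.ncard_lt_ncard hss (Set.toFinite _)
  omega

lemma side_small [Fintype V] {F : SimpleGraph V} (hnsc : NoSmallComponent F)
    (hdel : ∀ u v, F.Adj u v → ¬ NoSmallComponent (F.deleteEdges {s(u,v)}))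
    {u v : V} (huv : F.Adj u v) :
    {x | (F.deleteEdges {s(u,v)}).Reachable u x}.ncard ≤ 2 ∨
    {x | (F.deleteEdges {s(u,v)}).Reachable v x}.ncard ≤ 2 := by
  obtain ⟨z, hz⟩ := small_of_not_nsc (hdel u v huv)
  by_cases hzu : (F.deleteEdges {s(u,v)}).Reachable z u
  · left
    have : {x | (F.deleteEdges {s(u,v)}).Reachable u x} =
        {x | (F.deleteEdges {s(u,v)}).Reachable z x} := by
      ext x; exact ⟨fun hx => hzu.trans hx, fun hx => hzu.symm.trans hx⟩
    rw [this]; exact hz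
  by_cases hzv : (F.deleteEdges {s(u,v)}).Reachable z v
  · right
    have : {x | (F.deleteEdges {s(u,v)}).Reachable v x} =
        {x | (F.deleteEdges {s(u,v)}).Reachable z x} := by
      ext x; exact ⟨fun hx => hzv.trans hx, fun hx => hzv.symm.trans hx⟩
    rw [this]; exact hz
  · exfalso
    have heq : {x | (F.deleteEdges {s(u,v)}).Reachable z x} = {x | F.Reachable z x} := by
      ext x
      refine ⟨fun hx => hx.mono (F.deleteEdges_le _), fun hx => ?_⟩
      obtain ⟨p⟩ := hx
      rcases aux_surgery p with h1 | h1 | h1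
      · exact h1
      · exact absurd h1 hzu
      · exact absurd h1 hzv
    have := nsc_ncard hnsc z
    rw [← heq] at this
    omega

lemma minimal_acyclic [Fintype V] {F : SimpleGraph V} (hnsc : NoSmallComponent F)
    (hdel : ∀ u v, F.Adj u v → ¬ NoSmallComponent (F.deleteEdges {s(u,v)})) :
    F.IsAcyclic := by
  intro x p hp
  cases p with
  | nil => exact hp.ne_nil rfl
  | @cons _ y _ h q =>
    have hmem : s(x,y) ∈ (Walk.cons h q).edges := by simp
    have hkey := (SimpleGraph.adj_and_reachable_delete_edges_iff_exists_cycle.mpr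
      ⟨x, Walk.cons h q, hp, hmem⟩).2
    have hreach : (F.deleteEdges {s(x,y)}).Reachable x y := hkey
    apply hdel x y h
    intro w
    obtain ⟨a, b, hab, haw, hbw, ⟨pa⟩, ⟨pb⟩⟩ := hnsc w
    exact ⟨a, b, hab, haw, hbw, aux_bypass hreach pa, aux_bypass hreach pb⟩

lemma support_reachable {H : SimpleGraph V} {x y : V} (q : H.Walk x y) :
    ∀ w ∈ q.support, H.Reachable x w := by
  induction q with
  | nil => intro w hw; rw [Walk.support_nil, List.mem_singleton] at hw; subst hw; rfl
  | @cons a b c h q ih =>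
    intro w hw
    rw [Walk.support_cons, List.mem_cons] at hw
    rcases hw with rfl | hw
    · rfl
    · exact h.reachable.trans (ih w hw)

lemma adj_of_small_comp [Fintype V] {H : SimpleGraph V} {x y : V} (hxy : H.Reachable x y) (hne : x ≠ y)
    (hsmall : {w | H.Reachable x w}.ncard ≤ 2) : H.Adj x y := by
  classical
  obtain ⟨p0⟩ := hxy
  have hp : p0.bypass.IsPath := p0.bypass_isPath
  set p := p0.bypass with hpdef
  have hsub : ∀ w ∈ p.support, w ∈ {w | H.Reachable x w} := fun w hw => support_reachable p w hw
  have hcard : p.support.toFinset.card ≤ {w | H.Reachable x w}.ncard := by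
    rw [← Set.ncard_coe_finset]
    exact Set.ncard_le_ncard (by intro w hw; simp at hw; exact hsub w hw) (Set.toFinite _)
  have hnodup := hp.support_nodup
  have hlen : p.support.toFinset.card = p.support.length := by
    rw [List.card_toFinset, List.dedup_eq_self.mpr hnodup]
  have hsuplen : p.support.length = p.length + 1 := Walk.length_support p
  have hlen1 : p.length = 1 := by
    have h0 : p.length ≠ 0 := fun h0 => hne (Walk.eq_of_length_eq_zero h0)
    omega
  have := p.adj_getVert_succ (i := 0) (by omega)
  rwa [Walk.getVert_zero, show (0 + 1) = p.length from by omega, Walk.getVert_length] at this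

lemma side_of_nbr_small [Fintype V] {F : SimpleGraph V} (hnsc : NoSmallComponent F)
    (hdel : ∀ u v, F.Adj u v → ¬ NoSmallComponent (F.deleteEdges {s(u,v)}))
    {m x : V} (hm : 3 ≤ {y | F.Adj m y}.ncard) (hx : F.Adj m x) :
    {y | (F.deleteEdges {s(m,x)}).Reachable x y}.ncard ≤ 2 := by
  classical
  have hxmem : x ∈ {y | F.Adj m y} := hx
  have h2 : 1 < ({y | F.Adj m y} \ {x}).ncard := by
    have := Set.ncard_diff_singleton_of_mem hxmem
    omega
  obtain ⟨y1, y2, hy1, hy2, hne⟩ := (Set.one_lt_ncard_iff (Set.toFinite _)).mp h2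
  have hy1adj : F.Adj m y1 := hy1.1
  have hy2adj : F.Adj m y2 := hy2.1
  have hy1x : y1 ≠ x := fun h => hy1.2 (by simp [h])
  have hy2x : y2 ≠ x := fun h => hy2.2 (by simp [h])
  have hFe1 : (F.deleteEdges {s(m,x)}).Adj m y1 := by
    rw [SimpleGraph.deleteEdges_adj]
    exact ⟨hy1adj, fun hc => hy1x (Sym2.congr_right.mp (Set.mem_singleton_iff.mp hc))⟩
  have hFe2 : (F.deleteEdges {s(m,x)}).Adj m y2 := by
    rw [SimpleGraph.deleteEdges_adj]
    exact ⟨hy2adj, fun hc => hy2x (Sym2.congr_right.mp (Set.mem_singleton_iff.mp hc))⟩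
  have hbig : 3 ≤ {y | (F.deleteEdges {s(m,x)}).Reachable m y}.ncard := by
    have hsub : {m, y1, y2} ⊆ {y | (F.deleteEdges {s(m,x)}).Reachable m y} := by
      intro z hz
      rcases hz with rfl | rfl | rfl
      · exact Reachable.refl _
      · exact hFe1.reachable
      · exact hFe2.reachable
    have h3 : ({m, y1, y2} : Set V).ncard = 3 := by
      rw [Set.ncard_insert_of_notMem (by simp [hy1adj.ne, hy2adj.ne]) (Set.toFinite _),
        Set.ncard_pair hne]
    calc 3 = ({m, y1, y2} : Set V).ncard := h3.symm
      _ ≤ _ := Set.ncard_le_ncard hsub (Set.toFinite _)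
  rcases side_small hnsc hdel hx with h | h
  · omega
  · exact h

lemma center_of_bigdeg [Fintype V] {F : SimpleGraph V} (hnsc : NoSmallComponent F)
    (hdel : ∀ u v, F.Adj u v → ¬ NoSmallComponent (F.deleteEdges {s(u,v)}))
    {m : V} (hm : 3 ≤ {x | F.Adj m x}.ncard) : Is1StarCenter F m := by
  classical
  refine ⟨nsc_ncard hnsc m, ?_, ?_⟩
  · intro y hy
    by_cases hym : m = y
    · subst hym; simp [SimpleGraph.dist_self]
    obtain ⟨p0⟩ := hy
    have hp : p0.bypass.IsPath := p0.bypass_isPath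
    have hnotnil : ¬ p0.bypass.Nil := by
      rw [Walk.not_nil_iff_lt_length]
      rcases Nat.eq_zero_or_pos p0.bypass.length with h0 | h0
      · exact absurd (Walk.eq_of_length_eq_zero h0) hym
      · exact h0
    obtain ⟨c, hadj, q, hpq⟩ := Walk.not_nil_iff.mp hnotnil
    rw [hpq, Walk.cons_isPath_iff] at hp
    have hmnotsup : m ∉ q.support := hp.2
    have hedges : ∀ e ∈ q.edges, e ∉ ({s(m,c)} : Set (Sym2 V)) := by
      intro e he hmem
      rw [Set.mem_singleton_iff] at hmem
      subst hmem
      exact hmnotsup (q.fst_mem_support_of_mem_edges he)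
    have hreach : (F.deleteEdges {s(m,c)}).Reachable c y := ⟨q.toDeleteEdges _ hedges⟩
    have hsmall := side_of_nbr_small hnsc hdel hm hadj
    by_cases hcy : c = y
    · subst hcy
      exact le_trans (SimpleGraph.dist_le (Walk.cons hadj Walk.nil)) (by norm_num)
    · have hFeadj := adj_of_small_comp hreach hcy hsmall
      have hcyadj : F.Adj c y := (SimpleGraph.deleteEdges_adj.mp hFeadj).1
      exact le_trans (SimpleGraph.dist_le (Walk.cons hadj (Walk.cons hcyadj Walk.nil)))
        (by norm_num)
  · intro u hu
    have hsmall := side_of_nbr_small hnsc hdel hm hu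
    have husub : {x | F.Adj u x} ⊆
        insert m ({y | (F.deleteEdges {s(m,u)}).Reachable u y} \ {u}) := by
      intro z hz
      by_cases hzm : z = m
      · subst hzm; exact Set.mem_insert _ _
      · refine Set.mem_insert_of_mem _ ⟨?_, by simp [hz.ne']⟩
        have : (F.deleteEdges {s(m,u)}).Adj u z := by
          rw [SimpleGraph.deleteEdges_adj]
          refine ⟨hz, ?_⟩
          simp only [Set.mem_singleton_iff]
          intro hcontra
          rw [Sym2.eq_iff] at hcontra
          rcases hcontra with ⟨h1, h2⟩ | ⟨h1, h2⟩
          · exact hu.ne h1.symm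
          · exact hzm h2
        exact this.reachable
    have humem : u ∈ {y | (F.deleteEdges {s(m,u)}).Reachable u y} := Reachable.refl _
    have hdiff : ({y | (F.deleteEdges {s(m,u)}).Reachable u y} \ {u}).ncard ≤ 1 := by
      have := Set.ncard_diff_singleton_of_mem humem
      omega
    calc {x | F.Adj u x}.ncard
        ≤ (insert m ({y | (F.deleteEdges {s(m,u)}).Reachable u y} \ {u})).ncard :=
          Set.ncard_le_ncard husub (Set.toFinite _)
      _ ≤ _ + 1 := Set.ncard_insert_le _ _
      _ ≤ 2 := by omega

lemma getvert_inj {F : SimpleGraph V} : ∀ {a b : V} (p : F.Walk a b), p.IsPath →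
    ∀ i j, i ≤ p.length → j ≤ p.length → p.getVert i = p.getVert j → i = j := by
  intro a b p
  induction p with
  | nil => intro _ i j hi hj _; simp only [Walk.length_nil, Nat.le_zero] at hi hj; omega
  | @cons x y z h q ih =>
    intro hp i j hi hj heq
    rw [Walk.cons_isPath_iff] at hp
    match i, j with
    | 0, 0 => rfl
    | 0, (k+1) =>
      exfalso
      rw [Walk.getVert_cons_succ] at heq
      have : x ∈ q.support := Walk.mem_support_iff_exists_getVert.mpr
        ⟨k, heq.symm, by simpa using hj⟩
      exact hp.2 this
    | (k+1), 0 =>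
      exfalso
      rw [Walk.getVert_cons_succ] at heq
      have : x ∈ q.support := Walk.mem_support_iff_exists_getVert.mpr
        ⟨k, heq, by simpa using hi⟩
      exact hp.2 this
    | (k+1), (l+1) =>
      rw [Walk.getVert_cons_succ, Walk.getVert_cons_succ] at heq
      have := ih hp.1 k l (by simpa using hi) (by simpa using hj) heq
      omega

lemma getvert_walk {F : SimpleGraph V} {a b : V} (p : F.Walk a b) :
    ∀ k i, i + k ≤ p.length → ∃ q : F.Walk (p.getVert i) (p.getVert (i+k)), q.length = k := by
  intro k
  induction k with
  | zero => intro i _; exact ⟨Walk.nil, rfl⟩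
  | succ k ih =>
    intro i hi
    obtain ⟨q, hq⟩ := ih i (by omega)
    refine ⟨q.concat (p.adj_getVert_succ (by omega : i + k < p.length)), ?_⟩
    rw [Walk.length_concat, hq]

lemma getvert_dist {F : SimpleGraph V} {a b : V} (p : F.Walk a b) {i j : ℕ} (hij : i ≤ j)
    (hj : j ≤ p.length) : F.dist (p.getVert i) (p.getVert j) ≤ j - i := by
  obtain ⟨q, hq⟩ := getvert_walk p (j - i) i (by omega)
  have h := SimpleGraph.dist_le q
  rw [hq] at h
  rwa [show i + (j - i) = j from by omega] at h

lemma center_of_smalldeg [Fintype V] {F : SimpleGraph V} (hnsc : NoSmallComponent F)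
    (hdel : ∀ u v, F.Adj u v → ¬ NoSmallComponent (F.deleteEdges {s(u,v)}))
    (hacyc : F.IsAcyclic) {w : V}
    (hdeg : ∀ x, F.Reachable w x → {y | F.Adj x y}.ncard ≤ 2) :
    ∃ c, F.Reachable w c ∧ Is1StarCenter F c := by
  classical
  set P : Finset (V × V) :=
    Finset.univ.filter (fun q : V × V => F.Reachable w q.1 ∧ F.Reachable w q.2) with hP
  have hwwP : (w, w) ∈ P :=
    Finset.mem_filter.mpr ⟨Finset.mem_univ _, Reachable.refl w, Reachable.refl w⟩
  obtain ⟨⟨a, b⟩, hmemP, hD⟩ := P.exists_mem_eq_sup ⟨(w,w), hwwP⟩ (fun q => F.dist q.1 q.2)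
  set D := P.sup (fun q => F.dist q.1 q.2) with hDdef
  have hub : ∀ x y, F.Reachable w x → F.Reachable w y → F.dist x y ≤ D := by
    intro x y hx hy
    exact Finset.le_sup (f := fun q : V × V => F.dist q.1 q.2)
      (by simp [hP, hx, hy] : ((x,y) : V × V) ∈ P)
  obtain ⟨hwa, hwb⟩ : F.Reachable w a ∧ F.Reachable w b := by
    have := Finset.mem_filter.mp hmemP
    exact this.2
  have hab : F.Reachable a b := hwa.symm.trans hwb
  obtain ⟨p0, hp0⟩ := hab.exists_walk_length_eq_dist
  have hp : p0.bypass.IsPath := p0.bypass_isPath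
  set p := p0.bypass with hpdef
  have hplen : p.length = D := by
    have h1 : p.length ≤ p0.length := Walk.length_bypass_le p0
    have h2 := SimpleGraph.dist_le p
    have hD' : D = F.dist a b := hD
    omega
  have key : ∀ n t (q : F.Walk t a), q.length ≤ n → t ∈ p.support := by
    intro n
    induction n with
    | zero =>
      intro t q hq
      have : t = a := Walk.eq_of_length_eq_zero (p := q) (by omega)
      subst this
      exact p.start_mem_support
    | succ n ihn =>
      intro t q hq
      by_cases hxs : t ∈ p.support
      · exact hxs
      exfalso
      have hta : t ≠ a := fun h => hxs (h ▸ p.start_mem_support)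
      have hqnotnil : ¬ q.Nil := by
        rw [Walk.not_nil_iff_lt_length]
        rcases Nat.eq_zero_or_pos q.length with h0 | h0
        · exact absurd (Walk.eq_of_length_eq_zero h0) hta
        · exact h0
      obtain ⟨c, hadj, q', hq'⟩ := Walk.not_nil_iff.mp hqnotnil
      have hlq' : q'.length ≤ n := by
        rw [hq', Walk.length_cons] at hq
        omega
      have ih : c ∈ p.support := ihn c q' hlq'
      obtain ⟨i, hgi, hil⟩ := Walk.mem_support_iff_exists_getVert.mp ih
      have hxg : ∀ k, k ≤ p.length → t ≠ p.getVert k := fun k hk hxk =>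
        hxs (Walk.mem_support_iff_exists_getVert.mpr ⟨k, hxk.symm, hk⟩)
      have hxreach : F.Reachable w t := hwa.trans (Reachable.symm ⟨q⟩)
      by_cases hi0 : i = 0
      · -- c = a, extend path at the front
        have hca : c = a := by rw [← hgi, hi0, Walk.getVert_zero]
        subst hca
        have hpath : (Walk.cons hadj p).IsPath := hp.cons hxs
        obtain ⟨r0, hr0⟩ := (Reachable.trans ⟨Walk.cons hadj p⟩ (Reachable.refl b) :
          F.Reachable t b).exists_walk_length_eq_dist
        have hEq := SimpleGraph.isAcyclic_iff_path_unique.mp hacyc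
          ⟨Walk.cons hadj p, hpath⟩ ⟨r0.bypass, r0.bypass_isPath⟩
        have hlenEq : (Walk.cons hadj p).length = r0.bypass.length := by
          rw [Subtype.ext_iff] at hEq
          exact congrArg Walk.length hEq
        have hlb : r0.bypass.length ≤ r0.length := Walk.length_bypass_le _
        have hdxb : F.dist t b ≤ D := hub t b hxreach hwb
        rw [Walk.length_cons] at hlenEq
        omega
      by_cases hiD : i = p.length
      · -- c = b, extend reversed path
        have hcb : c = b := by rw [← hgi, hiD, Walk.getVert_length]
        subst hcb
        have hts : t ∉ p.reverse.support := by
          rw [Walk.support_reverse]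
          simpa using hxs
        have hpath : (Walk.cons hadj p.reverse).IsPath := hp.reverse.cons hts
        obtain ⟨r0, hr0⟩ := (Reachable.trans ⟨Walk.cons hadj p.reverse⟩ (Reachable.refl a) :
          F.Reachable t a).exists_walk_length_eq_dist
        have hEq := SimpleGraph.isAcyclic_iff_path_unique.mp hacyc
          ⟨Walk.cons hadj p.reverse, hpath⟩ ⟨r0.bypass, r0.bypass_isPath⟩
        have hlenEq : (Walk.cons hadj p.reverse).length = r0.bypass.length := by
          rw [Subtype.ext_iff] at hEq
          exact congrArg Walk.length hEq
        have hlb : r0.bypass.length ≤ r0.length := Walk.length_bypass_le _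
        have hdxa : F.dist t a ≤ D := hub t a hxreach hwa
        rw [Walk.length_cons, Walk.length_reverse] at hlenEq
        omega
      · -- middle vertex c has three distinct neighbors
        have h1 : F.Adj c (p.getVert (i-1)) := by
          have := p.adj_getVert_succ (i := i-1) (by omega)
          rw [show i - 1 + 1 = i from by omega, hgi] at this
          exact this.symm
        have h2 : F.Adj c (p.getVert (i+1)) := by
          have := p.adj_getVert_succ (i := i) (by omega)
          rw [hgi] at this
          exact this
        have h3 : F.Adj c t := hadj.symm
        have hne12 : p.getVert (i-1) ≠ p.getVert (i+1) := fun hEq => by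
          have := getvert_inj p hp (i-1) (i+1) (by omega) (by omega) hEq
          omega
        have hne1t : p.getVert (i-1) ≠ t := fun hEq => hxg (i-1) (by omega) hEq.symm
        have hne2t : p.getVert (i+1) ≠ t := fun hEq => hxg (i+1) (by omega) hEq.symm
        have hsub : {p.getVert (i-1), p.getVert (i+1), t} ⊆ {y | F.Adj c y} := by
          intro z hz
          rcases hz with rfl | rfl | rfl
          · exact h1
          · exact h2
          · exact h3
        have hcard : ({p.getVert (i-1), p.getVert (i+1), t} : Set V).ncard = 3 := by
          rw [Set.ncard_insert_of_notMem (by simp [hne12, hne1t]) (Set.toFinite _),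
            Set.ncard_pair hne2t]
        have hreachc : F.Reachable w c := hwa.trans (support_reachable p c ih)
        have hle := hdeg c hreachc
        have := Set.ncard_le_ncard hsub (Set.toFinite _)
        omega
  have hCsup : ∀ x, F.Reachable w x → x ∈ p.support := by
    intro x hx
    obtain ⟨q⟩ := hx.symm.trans hwa
    exact key q.length x q le_rfl
  have hD2 : 2 ≤ D := by
    have h3 := nsc_ncard hnsc w
    have hsub : {u | F.Reachable w u} ⊆ {x | x ∈ p.support} := fun x hx => hCsup x hx
    have hle2 : {x | x ∈ p.support}.ncard ≤ p.length + 1 := by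
      have hset : {x | x ∈ p.support} = ↑p.support.toFinset := by ext z; simp
      rw [hset, Set.ncard_coe_finset]
      calc p.support.toFinset.card ≤ p.support.length := List.toFinset_card_le _
        _ = p.length + 1 := Walk.length_support p
    have := Set.ncard_le_ncard hsub (Set.toFinite _)
    omega
  have hgvne : ∀ i j, i ≤ p.length → j ≤ p.length → i ≠ j → p.getVert i ≠ p.getVert j :=
    fun i j hi hj hne hEq => hne (getvert_inj p hp i j hi hj hEq)
  have hD4 : D ≤ 4 := by
    by_contra hD5
    push_neg at hD5
    have hadj23 : F.Adj (p.getVert 2) (p.getVert 3) := p.adj_getVert_succ (by omega)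
    have hEdge : ∀ i, i + 1 ≤ p.length → (i ≠ 2) →
        (F.deleteEdges {s(p.getVert 2, p.getVert 3)}).Adj (p.getVert i) (p.getVert (i+1)) := by
      intro i hi hne2
      rw [SimpleGraph.deleteEdges_adj]
      refine ⟨p.adj_getVert_succ (by omega), ?_⟩
      simp only [Set.mem_singleton_iff, Sym2.eq_iff]
      rintro (⟨hA, hB⟩ | ⟨hA, hB⟩)
      · exact hne2 (getvert_inj p hp i 2 (by omega) (by omega) hA)
      · have := getvert_inj p hp i 3 (by omega) (by omega) hA
        have := getvert_inj p hp (i+1) 2 (by omega) (by omega) hB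
        omega
    have hside2 : {p.getVert 2, p.getVert 1, p.getVert 0} ⊆
        {y | (F.deleteEdges {s(p.getVert 2, p.getVert 3)}).Reachable (p.getVert 2) y} := by
      intro z hz
      have e1 := (hEdge 1 (by omega) (by omega)).symm
      have e0 := (hEdge 0 (by omega) (by omega)).symm
      rcases hz with rfl | rfl | rfl
      · exact Reachable.refl _
      · exact e1.reachable
      · exact e1.reachable.trans e0.reachable
    have hside3 : {p.getVert 3, p.getVert 4, p.getVert 5} ⊆
        {y | (F.deleteEdges {s(p.getVert 2, p.getVert 3)}).Reachable (p.getVert 3) y} := by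
      intro z hz
      have e3 := hEdge 3 (by omega) (by omega)
      have e4 := hEdge 4 (by omega) (by omega)
      rcases hz with rfl | rfl | rfl
      · exact Reachable.refl _
      · exact e3.reachable
      · exact e3.reachable.trans e4.reachable
    have hc2 : ({p.getVert 2, p.getVert 1, p.getVert 0} : Set V).ncard = 3 := by
      rw [Set.ncard_insert_of_notMem (fun hmem => by
          rcases hmem with h | h
          · exact hgvne 2 1 (by omega) (by omega) (by omega) h
          · exact hgvne 2 0 (by omega) (by omega) (by omega) h) (Set.toFinite _),
        Set.ncard_pair (hgvne 1 0 (by omega) (by omega) (by omega))]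
    have hc3 : ({p.getVert 3, p.getVert 4, p.getVert 5} : Set V).ncard = 3 := by
      rw [Set.ncard_insert_of_notMem (fun hmem => by
          rcases hmem with h | h
          · exact hgvne 3 4 (by omega) (by omega) (by omega) h
          · exact hgvne 3 5 (by omega) (by omega) (by omega) h) (Set.toFinite _),
        Set.ncard_pair (hgvne 4 5 (by omega) (by omega) (by omega))]
    rcases side_small hnsc hdel hadj23 with h | h
    · have := Set.ncard_le_ncard hside2 (Set.toFinite _)
      omega
    · have := Set.ncard_le_ncard hside3 (Set.toFinite _)
      omega
  set n : ℕ := if D ≤ 3 then 1 else 2 with hn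
  have hn12 : (D ≤ 3 ∧ n = 1) ∨ (4 ≤ D ∧ n = 2) := by
    by_cases hD3 : D ≤ 3
    · left; exact ⟨hD3, by simp [hn, hD3]⟩
    · right; exact ⟨by omega, by simp [hn, hD3]⟩
  have hnle : n ≤ p.length := by rcases hn12 with ⟨_, h⟩ | ⟨_, h⟩ <;> omega
  have hcmem : p.getVert n ∈ p.support :=
    Walk.mem_support_iff_exists_getVert.mpr ⟨n, rfl, hnle⟩
  have hwc : F.Reachable w (p.getVert n) := hwa.trans (support_reachable p _ hcmem)
  refine ⟨p.getVert n, hwc, nsc_ncard hnsc _, ?_, ?_⟩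
  · intro u hcu
    have hwu : F.Reachable w u := hwc.trans hcu
    obtain ⟨i, hgi, hil⟩ := Walk.mem_support_iff_exists_getVert.mp (hCsup u hwu)
    rw [← hgi]
    rcases le_or_gt i n with hle | hlt
    · have hd := getvert_dist p hle hnle
      rw [SimpleGraph.dist_comm]
      rcases hn12 with ⟨_, h⟩ | ⟨_, h⟩ <;> omega
    · have hd := getvert_dist p (le_of_lt hlt) hil
      rcases hn12 with ⟨h4, h⟩ | ⟨h4, h⟩ <;> omega
  · intro u hcu
    exact hdeg u (hwc.trans hcu.reachable)


end AuxFor1Stars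

theorem stmt2 [Fintype V] (G : SimpleGraph V) (h : NoSmallComponent G) :
    ∃ F : SimpleGraph V, F ≤ G ∧ IsForestOf1Stars F := by
  classical
  obtain ⟨F, hFG, hnsc, hmin⟩ := exists_minimal G h
  have hdel : ∀ u v, F.Adj u v → ¬NoSmallComponent (F.deleteEdges {s(u,v)}) :=
    fun u v huv => delete_breaks hFG hmin huv
  have hacyc := minimal_acyclic hnsc hdel
  refine ⟨F, hFG, hacyc, fun w => ?_⟩
  by_cases hbig : ∃ m, F.Reachable w m ∧ 3 ≤ {x | F.Adj m x}.ncard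
  · obtain ⟨m, hwm, hm⟩ := hbig
    exact ⟨m, hwm, center_of_bigdeg hnsc hdel hm⟩
  · push_neg at hbig
    exact center_of_smalldeg hnsc hdel hacyc (fun x hx => by have := hbig x hx; omega)
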